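/- Let (g, ⟨,⟩_g) be a finite-dimensional quadratic Lie algebra and r^♭_± : g → g linear maps with r^♭_+ − r^♭_- = Id_g and ⟨r^♭_+(x₁), x₂⟩_g = −⟨x₁, r^♭_-(x₂)⟩_g for all x₁, x₂. Equip g ⊕ g with the symmetric bilinear form ⟨(x₁,x₂),(x₁′,x₂′)⟩ = ⟨x₁,x₁′⟩_g − ⟨x₂,x₂′⟩_g. Then the subspace l_r = {(r^♭_+(x), r^♭_-(x)) : x ∈ g} is isotropic (i.e. ⟨a,b⟩ = 0 for all a,b ∈ l_r), has dimension dim g, and g ⊕ g = g_diag ⊕ l_r is a direct sum of vector spaces, where g_diag = {(x,x) : x ∈ g}. -/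

import Mathlib

/-- for a finite-dimensional quadratic Lie algebra `(g, ⟨,⟩)` and linear maps
`r♭₊ - r♭₋ = id` with `⟨r♭₊ x₁, x₂⟩ = -⟨x₁, r♭₋ x₂⟩`, the subspace
`l_r = {(r♭₊ x, r♭₋ x)}` of `g ⊕ g` (with the difference form) is isotropic, has
dimension `dim g`, and `g ⊕ g = g_diag ⊕ l_r`. -/
theorem stmt3 {k g : Type*} [Field k] [LieRing g] [LieAlgebra k g] [FiniteDimensional k g]
    (B : LinearMap.BilinForm k g)
    (hsym : ∀ a b : g, B a b = B b a)
    (hnondeg : B.Nondegenerate)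
    (hinv : ∀ a b c : g, B ⁅a, b⁆ c = B a ⁅b, c⁆)
    (rp rm : g →ₗ[k] g)
    (hdiff : rp - rm = LinearMap.id)
    (hadj : ∀ a b : g, B (rp a) b + B a (rm b) = 0) :
    -- `l_r` is isotropic for the form `⟨(x₁,x₂),(x₁',x₂')⟩ = ⟨x₁,x₁'⟩ - ⟨x₂,x₂'⟩`
    (∀ x x' : g, B (rp x) (rp x') - B (rm x) (rm x') = 0)
    -- `dim l_r = dim g`
    ∧ Module.finrank k (LinearMap.range (rp.prod rm)) = Module.finrank k g
    -- `g ⊕ g = g_diag ⊕ l_r`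
    ∧ IsCompl (LinearMap.range ((LinearMap.id : g →ₗ[k] g).prod (LinearMap.id : g →ₗ[k] g)))
        (LinearMap.range (rp.prod rm)) := by
  have hdiff' : ∀ x : g, rp x - rm x = x := by
    intro x
    have := congrArg (fun f => f x) hdiff
    simpa [LinearMap.sub_apply] using this
  refine ⟨?_, ?_, ?_⟩
  · intro x x'
    have h1 : B (rp x) (rm x') - B (rm x) (rm x') = B x (rm x') := by
      rw [← LinearMap.BilinForm.sub_left, hdiff']
    have h2 : B (rp x) (rp x') - B (rp x) (rm x') = B (rp x) x' := by
      rw [← LinearMap.BilinForm.sub_right, hdiff']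
    have h3 := hadj x x'
    linear_combination h1 + h2 + h3
  · have hinj : Function.Injective (rp.prod rm) := by
      rw [← LinearMap.ker_eq_bot]
      rw [Submodule.eq_bot_iff]
      intro x hx
      simp only [LinearMap.mem_ker, LinearMap.prod_apply, Function.prod, Prod.mk_eq_zero] at hx
      have := hdiff' x
      rw [hx.1, hx.2] at this
      simpa using this.symm
    exact LinearMap.finrank_range_of_inj hinj
  · constructor
    · rw [Submodule.disjoint_def]
      rintro ⟨a, b⟩ ⟨x, hx⟩ ⟨y, hy⟩
      simp only [LinearMap.prod_apply, Function.prod, Prod.mk.injEq, LinearMap.id_apply] at hx hy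
      obtain ⟨hx1, hx2⟩ := hx
      obtain ⟨hy1, hy2⟩ := hy
      have hy0 : y = 0 := by
        have := hdiff' y
        rw [hy1, hy2, ← hx1, ← hx2] at this
        simpa using this.symm
      subst hy0
      simp only [map_zero] at hy1 hy2
      have hx0 : x = 0 := by rw [hx1, ← hy1]
      subst hx0
      rw [← hx1, ← hx2]
      rfl
    · rw [codisjoint_iff, eq_top_iff]
      rintro ⟨a, b⟩ -
      have : (a, b) = ((a - rp (a - b), a - rp (a - b)) : g × g) + (rp (a - b), rm (a - b)) := by
        have h := hdiff' (a - b)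
        rw [Prod.ext_iff]
        constructor
        · simp
        · simp only [Prod.snd_add]
          rw [sub_eq_iff_eq_add.mp h]
          abel
      rw [this]
      exact Submodule.add_mem_sup ⟨a - rp (a - b), rfl⟩ ⟨a - b, rfl⟩
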